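/- For every fixed t ∈ (0,1), the quotient F(x,t)/H(x) tends to −t/2 as x → 0 from the right. -/

import Mathlib

/-- `h x = -x log x` (with `h 0 = 0`, since `Real.log 0 = 0`). -/
noncomputable def entH (x : ℝ) : ℝ := -x * Real.log x

/-- `H x = h x + h (1 - x)`. -/
noncomputable def entHH (x : ℝ) : ℝ := entH x + entH (1 - x)

/-- The rate function `F(x,t)`. -/
noncomputable def entF (x t : ℝ) : ℝ :=
  (1 / 2) * entH (t * x) + entH ((1 - t) * x) + (1 / 2) * entH (1 - (2 - t) * x) - entHH x

open Filter Real Set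

/-- `log (1 - c x) / x → -c` as `x → 0⁺`. -/
lemma entAux_slope (c : ℝ) :
    Tendsto (fun x => Real.log (1 - c * x) / x) (nhdsWithin 0 (Set.Ioi 0)) (nhds (-c)) := by
  have hd : HasDerivAt (fun x : ℝ => Real.log (1 - c * x)) (-c) 0 := by
    have h1 : HasDerivAt (fun x : ℝ => 1 - c * x) (-c) 0 := by
      simpa using ((hasDerivAt_id (0 : ℝ)).const_mul c).const_sub (1 : ℝ)
    have h2 : HasDerivAt Real.log 1 ((fun x : ℝ => 1 - c * x) 0) := by
      simpa using Real.hasDerivAt_log (by norm_num : (1 : ℝ) - c * 0 ≠ 0)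
    simpa [Function.comp_def] using h2.comp 0 h1
  have h3 := hasDerivAt_iff_tendsto_slope.mp hd
  have h4 : Tendsto (slope (fun x : ℝ => Real.log (1 - c * x)) 0)
      (nhdsWithin 0 (Set.Ioi 0)) (nhds (-c)) :=
    h3.mono_left (nhdsWithin_mono 0 (fun x hx => ne_of_gt hx))
  refine h4.congr (fun x => ?_)
  simp [slope_def_field, Real.log_one]

/-- `(log x)⁻¹ → 0` as `x → 0⁺`. -/
lemma entAux_invlog :
    Tendsto (fun x : ℝ => (Real.log x)⁻¹) (nhdsWithin 0 (Set.Ioi 0)) (nhds 0) := by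
  have h1 : Tendsto (fun x : ℝ => -Real.log x) (nhdsWithin 0 (Set.Ioi 0)) atTop :=
    tendsto_neg_atTop_iff.mpr Real.tendsto_log_nhdsGT_zero
  have h2 := h1.inv_tendsto_atTop
  have h3 : Tendsto (fun x : ℝ => -(-Real.log x)⁻¹) (nhdsWithin 0 (Set.Ioi 0)) (nhds (-0)) :=
    h2.neg
  have h4 : Tendsto (fun x : ℝ => -(-Real.log x)⁻¹) (nhdsWithin 0 (Set.Ioi 0)) (nhds 0) := by
    simpa using h3
  exact h4.congr (fun x => by rw [inv_neg, neg_neg])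

theorem stmt_19 (t : ℝ) (ht : t ∈ Set.Ioo (0 : ℝ) 1) :
    Filter.Tendsto (fun x => entF x t / entHH x) (nhdsWithin 0 (Set.Ioi 0))
      (nhds (-t / 2)) := by
  obtain ⟨ht0, ht1⟩ := ht
  set c : ℝ := 2 - t with hc
  set φ : ℝ → ℝ := fun x => (t / 2 + (1 - t) - 1) + (Real.log x)⁻¹ *
      ((t * Real.log t) / 2 + (1 - t) * Real.log (1 - t)
        + (1 / 2) * (1 - c * x) * (Real.log (1 - c * x) / x)
        - (1 - x) * (Real.log (1 - x) / x)) with hφ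
  set κ : ℝ → ℝ := fun x => 1 + (Real.log x)⁻¹ * ((1 - x) * (Real.log (1 - x) / x)) with hκ
  -- limits of building blocks
  have hone : Tendsto (fun x : ℝ => Real.log (1 - x) / x) (nhdsWithin 0 (Set.Ioi 0))
      (nhds (-1)) := by
    refine (entAux_slope 1).congr (fun x => by rw [one_mul])
  have hlin : Tendsto (fun x : ℝ => 1 - x) (nhdsWithin 0 (Set.Ioi 0)) (nhds 1) := by
    have h : Tendsto (fun x : ℝ => 1 - x) (nhds 0) (nhds (1 - 0)) :=
      (tendsto_const_nhds (x := (1:ℝ))).sub Filter.tendsto_id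
    simpa using h.mono_left nhdsWithin_le_nhds
  have hlinc : Tendsto (fun x : ℝ => 1 - c * x) (nhdsWithin 0 (Set.Ioi 0)) (nhds 1) := by
    have h : Tendsto (fun x : ℝ => 1 - c * x) (nhds 0) (nhds (1 - c * 0)) :=
      (tendsto_const_nhds (x := (1:ℝ))).sub (Filter.tendsto_id.const_mul c)
    simpa using h.mono_left nhdsWithin_le_nhds
  have hB : Tendsto (fun x : ℝ => (t * Real.log t) / 2 + (1 - t) * Real.log (1 - t)
        + (1 / 2) * (1 - c * x) * (Real.log (1 - c * x) / x)
        - (1 - x) * (Real.log (1 - x) / x)) (nhdsWithin 0 (Set.Ioi 0))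
      (nhds ((t * Real.log t) / 2 + (1 - t) * Real.log (1 - t) + (1 / 2) * 1 * (-c)
        - 1 * (-1))) := by
    exact ((tendsto_const_nhds.add (((tendsto_const_nhds (x := (1:ℝ)/2)).mul hlinc).mul
      (entAux_slope c))).sub (hlin.mul hone))
  have hφlim : Tendsto φ (nhdsWithin 0 (Set.Ioi 0)) (nhds (-t / 2)) := by
    have h := tendsto_const_nhds (x := t / 2 + (1 - t) - 1)
      (f := nhdsWithin (0:ℝ) (Set.Ioi 0)) |>.add (entAux_invlog.mul hB)
    have : (-t / 2 : ℝ) = (t / 2 + (1 - t) - 1) + 0 * ((t * Real.log t) / 2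
        + (1 - t) * Real.log (1 - t) + (1 / 2) * 1 * (-c) - 1 * (-1)) := by ring
    rw [this]
    exact h
  have hκlim : Tendsto κ (nhdsWithin 0 (Set.Ioi 0)) (nhds 1) := by
    have h := tendsto_const_nhds (x := (1:ℝ))
      (f := nhdsWithin (0:ℝ) (Set.Ioi 0)) |>.add (entAux_invlog.mul (hlin.mul hone))
    have : (1 : ℝ) = 1 + 0 * (1 * (-1)) := by ring
    rw [this]
    exact h
  have hdiv : Tendsto (fun x => φ x / κ x) (nhdsWithin 0 (Set.Ioi 0)) (nhds (-t / 2)) := by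
    have := hφlim.div hκlim one_ne_zero
    rw [div_one] at this
    exact this
  -- eventual equality
  refine hdiv.congr' ?_
  filter_upwards [Ioo_mem_nhdsGT_of_mem (by norm_num : (0:ℝ) ∈ Set.Ico (0:ℝ) (1/4))]
    with x hx
  obtain ⟨hx0, hx4⟩ : 0 < x ∧ x < 1/4 := ⟨hx.1, hx.2⟩
  have hxne : x ≠ 0 := ne_of_gt hx0
  have hlogx : Real.log x < 0 := Real.log_neg hx0 (by linarith)
  have hlogxne : Real.log x ≠ 0 := ne_of_lt hlogx
  have hhx : 0 < entH x := by
    unfold entH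
    nlinarith
  have hh1x : 0 < entH (1 - x) := by
    unfold entH
    have h1 : Real.log (1 - x) < 0 := Real.log_neg (by linarith) (by linarith)
    nlinarith
  have hHH : 0 < entHH x := by unfold entHH; linarith
  have hlogt : Real.log (t * x) = Real.log t + Real.log x :=
    Real.log_mul (ne_of_gt ht0) hxne
  have hlog1t : Real.log ((1 - t) * x) = Real.log (1 - t) + Real.log x :=
    Real.log_mul (by linarith) hxne
  have hκval : κ x = entHH x / entH x := by
    rw [hκ]
    unfold entHH entH
    field_simp
    ring
  have hφval : φ x = entF x t / entH x := by
    rw [hφ]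
    unfold entF entHH entH
    rw [hlogt, hlog1t, hc]
    field_simp
    ring
  rw [hφval, hκval]
  field_simp
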